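/- Let G = (V,E) be a finite simple graph, k ≥ 1 an integer, and v a large-dense vertex of G. Then for every feasible solution X for (G,k) with v ∉ X, the connected component of G − X containing v is a clique. -/

import Mathlib

open SimpleGraph

/-- The number of edges of `G` with both endpoints in the neighborhood of `v`. -/
noncomputable def rho {V : Type*} (G : SimpleGraph V) (v : V) : ℕ :=
  {e : Sym2 V | e ∈ G.edgeSet ∧ ∀ x ∈ e, G.Adj v x}.ncard

/-- `v` is large-sparse: `|N(v)| > 7k` and `ρ(v) ≤ |N(v)|(|N(v)|−1)/4`. -/
def LargeSparse {V : Type*} (G : SimpleGraph V) (k : ℕ) (v : V) : Prop :=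
  7 * k < (G.neighborSet v).ncard ∧
    4 * rho G v ≤ (G.neighborSet v).ncard * ((G.neighborSet v).ncard - 1)

/-- `v` is large-dense: `|N(v)| > 7k` and `ρ(v) > |N(v)|(|N(v)|−1)/4`. -/
def LargeDense {V : Type*} (G : SimpleGraph V) (k : ℕ) (v : V) : Prop :=
  7 * k < (G.neighborSet v).ncard ∧
    (G.neighborSet v).ncard * ((G.neighborSet v).ncard - 1) < 4 * rho G v

/-- The connected component `c` of `H` is a clique. -/
def CompIsClique {W : Type*} (H : SimpleGraph W) (c : H.ConnectedComponent) : Prop :=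
  H.IsClique c.supp

/-- The connected component `c` of `H` is a tree. -/
def CompIsTree {W : Type*} (H : SimpleGraph W) (c : H.ConnectedComponent) : Prop :=
  (H.induce c.supp).IsTree

/-- Every connected component of `H` is a clique or a tree. -/
def CliquesOrTrees {W : Type*} (H : SimpleGraph W) : Prop :=
  ∀ c : H.ConnectedComponent, CompIsClique H c ∨ CompIsTree H c

/-- `X` is a feasible solution for `(G, k)`: `|X| ≤ k` and every connected component of
`G − X` is a clique or a tree. -/
def IsFeasible {V : Type*} (G : SimpleGraph V) (k : ℕ) (X : Set V) : Prop :=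
  X.ncard ≤ k ∧ CliquesOrTrees (G.induce (Xᶜ : Set V))

lemma ncard_sprod {α β : Type*} (s : Set α) (t : Set β) :
    (s ×ˢ t).ncard = s.ncard * t.ncard := by
  rw [← Nat.card_coe_set_eq, ← Nat.card_coe_set_eq, ← Nat.card_coe_set_eq,
    Nat.card_congr (Equiv.Set.prod s t), Nat.card_prod]

/-- if `v` is large-dense and `X` is a feasible solution for `(G,k)` with
`v ∉ X`, then the connected component of `G − X` containing `v` is a clique. -/
theorem stmt_1 {V : Type*} [Fintype V] (G : SimpleGraph V) (k : ℕ) (hk : 1 ≤ k) (v : V)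
    (hv : LargeDense G k v) (X : Set V) (hX : IsFeasible G k X) (hvX : v ∉ X) :
    CompIsClique (G.induce (Xᶜ : Set V))
      ((G.induce (Xᶜ : Set V)).connectedComponentMk ⟨v, hvX⟩) := by
  classical
  set H := G.induce (Xᶜ : Set V) with hH
  set c := H.connectedComponentMk ⟨v, hvX⟩ with hc
  rcases hX.2 c with hclique | htree
  · exact hclique
  exfalso
  -- key: every edge counted by rho has an endpoint in X
  set N := G.neighborSet v with hN
  set S : Set (Sym2 V) := {e : Sym2 V | e ∈ G.edgeSet ∧ ∀ x ∈ e, G.Adj v x} with hS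
  have key : ∀ e ∈ S, ∃ x ∈ e, x ∈ X := by
    intro e he
    induction e using Sym2.ind with
    | _ u w =>
      by_contra hcon
      push_neg at hcon
      have huX : u ∉ X := hcon u (by simp)
      have hwX : w ∉ X := hcon w (by simp)
      have huw : G.Adj u w := he.1
      have hvu : G.Adj v u := he.2 u (by simp)
      have hvw : G.Adj v w := he.2 w (by simp)
      -- vertices in H
      let v' : (Xᶜ : Set V) := ⟨v, hvX⟩
      let u' : (Xᶜ : Set V) := ⟨u, huX⟩
      let w' : (Xᶜ : Set V) := ⟨w, hwX⟩
      have hvu' : H.Adj v' u' := hvu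
      have hvw' : H.Adj v' w' := hvw
      have huw' : H.Adj u' w' := huw
      have hv'c : v' ∈ c.supp := by simp [hc]; exact Reachable.refl _
      have hu'c : u' ∈ c.supp := by
        simp only [ConnectedComponent.mem_supp_iff, hc]
        exact ConnectedComponent.sound hvu'.symm.reachable
      have hw'c : w' ∈ c.supp := by
        simp only [ConnectedComponent.mem_supp_iff, hc]
        exact ConnectedComponent.sound hvw'.symm.reachable
      -- triangle in the induced component
      have h3 : ∃ s : Finset c.supp, (H.induce c.supp).IsNClique 3 s := by
        refine ⟨{⟨v', hv'c⟩, ⟨u', hu'c⟩, ⟨w', hw'c⟩}, ?_⟩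
        rw [SimpleGraph.is3Clique_triple_iff]
        exact ⟨hvu', hvw', huw'⟩
      rw [SimpleGraph.is3Clique_iff_exists_cycle_length_three] at h3
      obtain ⟨a, wk, hcyc, -⟩ := h3
      exact htree.IsAcyclic wk hcyc
  -- counting
  have hsub : S ⊆ (fun p : V × V => s(p.1, p.2)) '' ((X ∩ N) ×ˢ N) := by
    intro e he
    induction e using Sym2.ind with
    | _ u w =>
      obtain ⟨x, hxe, hxX⟩ := key _ he
      have hw : w ∈ N := (he.2 w (by simp))
      rcases Sym2.mem_iff.mp hxe with rfl | rfl
      · exact ⟨(x, w), ⟨⟨hxX, he.2 x (by simp)⟩, hw⟩, rfl⟩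
      · exact ⟨(x, u), ⟨⟨hxX, he.2 x (by simp)⟩, he.2 u (by simp)⟩, Sym2.eq_swap⟩
  have hfin : ((X ∩ N) ×ˢ N).Finite := Set.toFinite _
  have h1 : S.ncard ≤ ((X ∩ N) ×ˢ N).ncard :=
    le_trans (Set.ncard_le_ncard hsub (hfin.image _)) (Set.ncard_image_le hfin)
  rw [ncard_sprod] at h1
  have h2 : (X ∩ N).ncard ≤ k :=
    le_trans (Set.ncard_le_ncard Set.inter_subset_left (Set.toFinite _)) hX.1
  have h3 : S.ncard ≤ k * N.ncard :=
    le_trans h1 (Nat.mul_le_mul_right _ h2)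
  have hbig : 7 * k < N.ncard := hv.1
  have hdense : N.ncard * (N.ncard - 1) < 4 * S.ncard := hv.2
  have h5 : 4 * (k * N.ncard) ≤ (N.ncard - 1) * N.ncard := by
    have h4k : 4 * k ≤ N.ncard - 1 := by omega
    calc 4 * (k * N.ncard) = (4 * k) * N.ncard := by ring
      _ ≤ (N.ncard - 1) * N.ncard := Nat.mul_le_mul_right _ h4k
  have hfin2 : N.ncard * (N.ncard - 1) < N.ncard * (N.ncard - 1) :=
    lt_of_lt_of_le hdense
      (le_trans (by omega : 4 * S.ncard ≤ 4 * (k * N.ncard))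
        (h5.trans_eq (Nat.mul_comm _ _)))
  exact lt_irrefl _ hfin2
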